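/- Let L > 0. There exists a constant C > 0 depending only on L with the following property: for every odd integer N = 2K+1 ≥ 3 with h = L/N and every N-periodic grid function u : (ℤ/N)² → ℝ with zero mean (h² Σ_{i,j} u_{ij} = 0), one has ‖D_x u‖₄ ≤ C ‖u‖₂^{1/4} · ‖Δ_h u‖₂^{3/4}, where (D_x u)_{i+1/2,j} = (u_{i+1,j} − u_{i,j})/h, Δ_h u_{ij} = (u_{i+1,j} + u_{i−1,j} + u_{i,j+1} + u_{i,j−1} − 4u_{ij})/h², ‖D_x u‖₄⁴ = h² Σ_{i,j} |(D_x u)_{i+1/2,j}|⁴, and ‖v‖₂² = h² Σ_{i,j} v_{ij}². -/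

import Mathlib

/-- The five-point discrete Laplacian on a grid of mesh size `h`. -/
noncomputable def discLap (h : ℝ) (u : ℤ → ℤ → ℝ) (i j : ℤ) : ℝ :=
  (u (i + 1) j + u (i - 1) j + u i (j + 1) + u i (j - 1) - 4 * u i j) / h ^ 2

/-- The discrete `ℓ²` norm `‖v‖₂ = (h² Σ_{i,j=0}^{N-1} v_{ij}²)^{1/2}`. -/
noncomputable def discL2 (h : ℝ) (N : ℕ) (v : ℤ → ℤ → ℝ) : ℝ :=
  Real.sqrt (h ^ 2 * ∑ i ∈ Finset.range N, ∑ j ∈ Finset.range N, v (i : ℤ) (j : ℤ) ^ 2)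

/-- The discrete `ℓ⁴` norm of the forward `x`-difference `D_x u`. -/
noncomputable def discDxL4 (h : ℝ) (N : ℕ) (u : ℤ → ℤ → ℝ) : ℝ :=
  (h ^ 2 * ∑ i ∈ Finset.range N, ∑ j ∈ Finset.range N,
      ((u ((i : ℤ) + 1) (j : ℤ) - u (i : ℤ) (j : ℤ)) / h) ^ 4) ^ ((1 : ℝ) / 4)


namespace S18
open Finset

def SS (N : ℕ) (f : ℤ → ℤ → ℝ) : ℝ := ∑ i ∈ range N, ∑ j ∈ range N, f (i : ℤ) (j : ℤ)

def PerX (N : ℕ) (f : ℤ → ℤ → ℝ) : Prop := ∀ i j : ℤ, f (i + (N:ℤ)) j = f i j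
def PerY (N : ℕ) (f : ℤ → ℤ → ℝ) : Prop := ∀ i j : ℤ, f i (j + (N:ℤ)) = f i j

theorem shift1 (N : ℕ) (g : ℤ → ℝ) (hg : ∀ x : ℤ, g (x + (N:ℤ)) = g x) :
    ∑ i ∈ range N, g ((i : ℤ) + 1) = ∑ i ∈ range N, g (i : ℤ) := by
  have h := Finset.sum_range_sub (fun n : ℕ => g (n : ℤ)) N
  rw [Finset.sum_sub_distrib] at h
  push_cast at h
  have h3 : g ((N:ℤ)) = g 0 := by simpa using hg 0
  linarith

theorem shiftm1 (N : ℕ) (g : ℤ → ℝ) (hg : ∀ x : ℤ, g (x + (N:ℤ)) = g x) :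
    ∑ i ∈ range N, g ((i : ℤ) - 1) = ∑ i ∈ range N, g (i : ℤ) := by
  have h := shift1 N (fun x => g (x - 1)) (fun x => by
    rw [show x + (N:ℤ) - 1 = (x - 1) + (N:ℤ) by ring, hg])
  simp only [add_sub_cancel_right] at h
  exact h.symm

theorem SS_shift_x {N : ℕ} {f : ℤ → ℤ → ℝ} (hf : PerX N f) :
    SS N (fun i j => f (i + 1) j) = SS N f :=
  shift1 N (fun x => ∑ j ∈ range N, f x (j:ℤ))
    (fun x => Finset.sum_congr rfl fun j _ => hf x j)

theorem SS_shift_x_neg {N : ℕ} {f : ℤ → ℤ → ℝ} (hf : PerX N f) :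
    SS N (fun i j => f (i - 1) j) = SS N f :=
  shiftm1 N (fun x => ∑ j ∈ range N, f x (j:ℤ))
    (fun x => Finset.sum_congr rfl fun j _ => hf x j)

theorem SS_shift_y {N : ℕ} {f : ℤ → ℤ → ℝ} (hf : PerY N f) :
    SS N (fun i j => f i (j + 1)) = SS N f :=
  Finset.sum_congr rfl fun i _ => shift1 N (fun y => f (i:ℤ) y) (fun y => hf (i:ℤ) y)

theorem SS_shift_y_neg {N : ℕ} {f : ℤ → ℤ → ℝ} (hf : PerY N f) :
    SS N (fun i j => f i (j - 1)) = SS N f :=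
  Finset.sum_congr rfl fun i _ => shiftm1 N (fun y => f (i:ℤ) y) (fun y => hf (i:ℤ) y)

theorem SS_congr {N : ℕ} {f g : ℤ → ℤ → ℝ} (h : ∀ i j : ℤ, f i j = g i j) :
    SS N f = SS N g :=
  Finset.sum_congr rfl fun i _ => Finset.sum_congr rfl fun j _ => h _ _

theorem SS_add {N : ℕ} (f g : ℤ → ℤ → ℝ) :
    SS N (fun i j => f i j + g i j) = SS N f + SS N g := by
  simp [SS, Finset.sum_add_distrib]

theorem SS_sub {N : ℕ} (f g : ℤ → ℤ → ℝ) :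
    SS N (fun i j => f i j - g i j) = SS N f - SS N g := by
  simp [SS, Finset.sum_sub_distrib]

theorem SS_nonneg {N : ℕ} {f : ℤ → ℤ → ℝ} (h : ∀ i j : ℤ, 0 ≤ f i j) :
    0 ≤ SS N f :=
  Finset.sum_nonneg fun i _ => Finset.sum_nonneg fun j _ => h _ _

theorem SS_le {N : ℕ} {f g : ℤ → ℤ → ℝ} (h : ∀ i j : ℤ, f i j ≤ g i j) :
    SS N f ≤ SS N g :=
  Finset.sum_le_sum fun i _ => Finset.sum_le_sum fun j _ => h _ _

theorem SS_cs {N : ℕ} (f g : ℤ → ℤ → ℝ) :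
    (SS N (fun i j => f i j * g i j))^2 ≤
      SS N (fun i j => f i j ^ 2) * SS N (fun i j => g i j ^ 2) := by
  have := Finset.sum_mul_sq_le_sq_mul_sq ((range N) ×ˢ (range N))
    (fun p => f (p.1:ℤ) (p.2:ℤ)) (fun p => g (p.1:ℤ) (p.2:ℤ))
  simpa [SS, Finset.sum_product] using this

-- closure lemmas for periodicity
theorem PerX.shiftxp {N : ℕ} {f : ℤ → ℤ → ℝ} (hf : PerX N f) (c : ℤ) :
    PerX N (fun i j => f (i + c) j) := fun i j => by
  simp only []
  rw [show i + (N:ℤ) + c = (i + c) + (N:ℤ) by ring, hf]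

theorem PerX.shiftxm {N : ℕ} {f : ℤ → ℤ → ℝ} (hf : PerX N f) (c : ℤ) :
    PerX N (fun i j => f (i - c) j) := fun i j => by
  simp only []
  rw [show i + (N:ℤ) - c = (i - c) + (N:ℤ) by ring, hf]

theorem PerX.shiftyp {N : ℕ} {f : ℤ → ℤ → ℝ} (hf : PerX N f) (c : ℤ) :
    PerX N (fun i j => f i (j + c)) := fun i j => hf i (j + c)

theorem PerX.shiftym {N : ℕ} {f : ℤ → ℤ → ℝ} (hf : PerX N f) (c : ℤ) :
    PerX N (fun i j => f i (j - c)) := fun i j => hf i (j - c)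

theorem PerY.shiftyp {N : ℕ} {f : ℤ → ℤ → ℝ} (hf : PerY N f) (c : ℤ) :
    PerY N (fun i j => f i (j + c)) := fun i j => by
  simp only []
  rw [show j + (N:ℤ) + c = (j + c) + (N:ℤ) by ring, hf]

theorem PerY.shiftym {N : ℕ} {f : ℤ → ℤ → ℝ} (hf : PerY N f) (c : ℤ) :
    PerY N (fun i j => f i (j - c)) := fun i j => by
  simp only []
  rw [show j + (N:ℤ) - c = (j - c) + (N:ℤ) by ring, hf]

theorem PerY.shiftxp {N : ℕ} {f : ℤ → ℤ → ℝ} (hf : PerY N f) (c : ℤ) :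
    PerY N (fun i j => f (i + c) j) := fun i j => hf (i + c) j

theorem PerY.shiftxm {N : ℕ} {f : ℤ → ℤ → ℝ} (hf : PerY N f) (c : ℤ) :
    PerY N (fun i j => f (i - c) j) := fun i j => hf (i - c) j

theorem PerX.sub {N : ℕ} {f g : ℤ → ℤ → ℝ} (hf : PerX N f) (hg : PerX N g) :
    PerX N (fun i j => f i j - g i j) := fun i j => by dsimp only; rw [hf, hg]

theorem PerX.add {N : ℕ} {f g : ℤ → ℤ → ℝ} (hf : PerX N f) (hg : PerX N g) :
    PerX N (fun i j => f i j + g i j) := fun i j => by dsimp only; rw [hf, hg]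

theorem PerX.mul {N : ℕ} {f g : ℤ → ℤ → ℝ} (hf : PerX N f) (hg : PerX N g) :
    PerX N (fun i j => f i j * g i j) := fun i j => by dsimp only; rw [hf, hg]

theorem PerX.pow {N : ℕ} {f : ℤ → ℤ → ℝ} (hf : PerX N f) (n : ℕ) :
    PerX N (fun i j => f i j ^ n) := fun i j => by dsimp only; rw [hf]

theorem PerX.abs {N : ℕ} {f : ℤ → ℤ → ℝ} (hf : PerX N f) :
    PerX N (fun i j => |f i j|) := fun i j => by dsimp only; rw [hf]

theorem PerY.sub {N : ℕ} {f g : ℤ → ℤ → ℝ} (hf : PerY N f) (hg : PerY N g) :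
    PerY N (fun i j => f i j - g i j) := fun i j => by dsimp only; rw [hf, hg]

theorem PerY.add {N : ℕ} {f g : ℤ → ℤ → ℝ} (hf : PerY N f) (hg : PerY N g) :
    PerY N (fun i j => f i j + g i j) := fun i j => by dsimp only; rw [hf, hg]

theorem PerY.mul {N : ℕ} {f g : ℤ → ℤ → ℝ} (hf : PerY N f) (hg : PerY N g) :
    PerY N (fun i j => f i j * g i j) := fun i j => by dsimp only; rw [hf, hg]

theorem PerY.pow {N : ℕ} {f : ℤ → ℤ → ℝ} (hf : PerY N f) (n : ℕ) :
    PerY N (fun i j => f i j ^ n) := fun i j => by dsimp only; rw [hf]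

theorem PerY.abs {N : ℕ} {f : ℤ → ℤ → ℝ} (hf : PerY N f) :
    PerY N (fun i j => |f i j|) := fun i j => by dsimp only; rw [hf]


theorem SS_neg {N : ℕ} (f : ℤ → ℤ → ℝ) : SS N (fun i j => -(f i j)) = -SS N f := by
  simp [SS, Finset.sum_neg_distrib]

theorem SS_const_mul {N : ℕ} (c : ℝ) (f : ℤ → ℤ → ℝ) :
    SS N (fun i j => c * f i j) = c * SS N f := by
  simp [SS, Finset.mul_sum]

theorem m1p1 (x : ℤ) : x - 1 + 1 = x := by ring
theorem p1m1 (x : ℤ) : x + 1 - 1 = x := by ring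

def dX (u : ℤ → ℤ → ℝ) : ℤ → ℤ → ℝ := fun i j => u (i + 1) j - u i j
def dY (u : ℤ → ℤ → ℝ) : ℤ → ℤ → ℝ := fun i j => u i (j + 1) - u i j
def lp (u : ℤ → ℤ → ℝ) : ℤ → ℤ → ℝ :=
  fun i j => (dX u i j - dX u (i - 1) j) + (dY u i j - dY u i (j - 1))

section main
variable {N : ℕ} {u : ℤ → ℤ → ℝ}

theorem perX_dX (hx : PerX N u) : PerX N (dX u) := (hx.shiftxp 1).sub hx
theorem perY_dX (hy : PerY N u) : PerY N (dX u) := (hy.shiftxp 1).sub hy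
theorem perX_dY (hx : PerX N u) : PerX N (dY u) := (hx.shiftyp 1).sub hx
theorem perY_dY (hy : PerY N u) : PerY N (dY u) := (hy.shiftyp 1).sub hy
theorem perX_lp (hx : PerX N u) : PerX N (lp u) :=
  ((perX_dX hx).sub ((perX_dX hx).shiftxm 1)).add
    ((perX_dY hx).sub ((perX_dY hx).shiftym 1))
theorem perY_lp (hy : PerY N u) : PerY N (lp u) :=
  ((perY_dX hy).sub ((perY_dX hy).shiftxm 1)).add
    ((perY_dY hy).sub ((perY_dY hy).shiftym 1))

/-- Summation by parts: `∑ u·Δu = -(∑|Dx u|² + ∑|Dy u|²)`. -/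
theorem energy (hx : PerX N u) (hy : PerY N u) :
    SS N (fun i j => u i j * lp u i j) =
      -(SS N (fun i j => dX u i j ^ 2) + SS N (fun i j => dY u i j ^ 2)) := by
  have hPx : SS N (fun i j => u i j * dX u (i - 1) j)
      = SS N (fun i j => u (i + 1) j * dX u i j) := by
    have hper : PerX N (fun i j => u (i + 1) j * dX u i j) :=
      (hx.shiftxp 1).mul (perX_dX hx)
    rw [← SS_shift_x_neg hper]
    exact SS_congr (fun i j => by simp only [dX, m1p1])
  have hPy : SS N (fun i j => u i j * dY u i (j - 1))
      = SS N (fun i j => u i (j + 1) * dY u i j) := by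
    have hper : PerY N (fun i j => u i (j + 1) * dY u i j) :=
      (hy.shiftyp 1).mul (perY_dY hy)
    rw [← SS_shift_y_neg hper]
    exact SS_congr (fun i j => by simp only [dY, m1p1])
  have expand : SS N (fun i j => u i j * lp u i j)
      = (SS N (fun i j => u i j * dX u i j) - SS N (fun i j => u i j * dX u (i - 1) j))
        + (SS N (fun i j => u i j * dY u i j) - SS N (fun i j => u i j * dY u i (j - 1))) := by
    rw [← SS_sub, ← SS_sub, ← SS_add]
    exact SS_congr (fun i j => by simp only [lp, dX, dY]; ring)
  rw [expand, hPx, hPy, ← SS_sub, ← SS_sub]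
  rw [show (fun i j => u i j * dX u i j - u (i + 1) j * dX u i j)
      = (fun i j => -(dX u i j ^ 2)) from funext fun i => funext fun j => by
        simp only [dX]; ring]
  rw [show (fun i j => u i j * dY u i j - u i (j + 1) * dY u i j)
      = (fun i j => -(dY u i j ^ 2)) from funext fun i => funext fun j => by
        simp only [dY]; ring]
  rw [SS_neg, SS_neg]; ring

/-- The mixed-difference identity: `∑ P·Q = ∑ c²`. -/
theorem crossPQ (hx : PerX N u) (hy : PerY N u) :
    SS N (fun i j => (dX u i j - dX u (i - 1) j) * ((dY u i j - dY u i (j - 1))))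
      = SS N (fun i j => (dX u i (j + 1) - dX u i j) ^ 2) := by
  have perQ : PerX N (fun i j => dY u i j - dY u i (j - 1)) :=
    (perX_dY hx).sub ((perX_dY hx).shiftym 1)
  have s1 : SS N (fun i j => dX u (i - 1) j * (dY u i j - dY u i (j - 1)))
      = SS N (fun i j => dX u i j * (dY u (i + 1) j - dY u (i + 1) (j - 1))) := by
    have hper : PerX N (fun i j => dX u i j * (dY u (i + 1) j - dY u (i + 1) (j - 1))) :=
      (perX_dX hx).mul (perQ.shiftxp 1)
    rw [← SS_shift_x_neg hper]
    exact SS_congr (fun i j => by simp only [dX, dY, m1p1])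
  have s2 : SS N (fun i j => dX u i j * (dX u i (j - 1 + 1) - dX u i (j - 1)))
      = SS N (fun i j => dX u i (j + 1) * (dX u i (j + 1) - dX u i j)) := by
    have hper : PerY N (fun i j => dX u i (j + 1) * (dX u i (j + 1) - dX u i j)) :=
      ((perY_dX hy).shiftyp 1).mul (((perY_dX hy).shiftyp 1).sub (perY_dX hy))
    rw [← SS_shift_y_neg hper]
    exact SS_congr (fun i j => by simp only [dX, dY, m1p1])
  calc SS N (fun i j => (dX u i j - dX u (i - 1) j) * ((dY u i j - dY u i (j - 1))))
      = SS N (fun i j => dX u i j * (dY u i j - dY u i (j - 1)))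
        - SS N (fun i j => dX u (i - 1) j * (dY u i j - dY u i (j - 1))) := by
        rw [← SS_sub]; exact SS_congr (fun i j => by ring)
    _ = SS N (fun i j => dX u i j * (dY u i j - dY u i (j - 1)))
        - SS N (fun i j => dX u i j * (dY u (i + 1) j - dY u (i + 1) (j - 1))) := by rw [s1]
    _ = SS N (fun i j => dX u i j * (dX u i (j - 1 + 1) - dX u i (j - 1)))
        - SS N (fun i j => dX u i j * (dX u i (j + 1) - dX u i j)) := by
        rw [← SS_sub, ← SS_sub]
        exact SS_congr (fun i j => by simp only [dX, dY, m1p1]; ring)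
    _ = SS N (fun i j => dX u i (j + 1) * (dX u i (j + 1) - dX u i j))
        - SS N (fun i j => dX u i j * (dX u i (j + 1) - dX u i j)) := by rw [s2]
    _ = SS N (fun i j => (dX u i (j + 1) - dX u i j) ^ 2) := by
        rw [← SS_sub]; exact SS_congr (fun i j => by ring)

end main


/-- Cauchy–Schwarz with the constant function: `(∑ f)² ≤ N ∑ f²`. -/
theorem sq_sum_le (N : ℕ) (f : ℕ → ℝ) :
    (∑ k ∈ range N, f k) ^ 2 ≤ (N : ℝ) * ∑ k ∈ range N, f k ^ 2 := by
  have := Finset.sum_mul_sq_le_sq_mul_sq (range N) (fun _ => (1:ℝ)) f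
  simpa using this

/-- 1D total variation bound. -/
theorem tv_bound (N : ℕ) (g : ℤ → ℝ) {i i' : ℕ} (hi : i < N) (hi' : i' < N) :
    |g (i:ℤ) - g (i':ℤ)| ≤ ∑ k ∈ range N, |g ((k:ℤ) + 1) - g (k:ℤ)| := by
  have t : ∀ p : ℕ, ∑ k ∈ range p, (g ((k:ℤ)+1) - g (k:ℤ)) = g (p:ℤ) - g 0 := by
    intro p
    have h := Finset.sum_range_sub (fun q : ℕ => g (q:ℤ)) p
    push_cast at h
    convert h using 1
  have key : ∀ m n : ℕ, m ≤ n → n ≤ N →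
      |g (n:ℤ) - g (m:ℤ)| ≤ ∑ k ∈ range N, |g ((k:ℤ)+1) - g (k:ℤ)| := by
    intro m n hmn hnN
    have h1 : g (n:ℤ) - g (m:ℤ) = ∑ k ∈ Ico m n, (g ((k:ℤ)+1) - g (k:ℤ)) := by
      rw [Finset.sum_Ico_eq_sub _ hmn, t, t]; ring
    calc |g (n:ℤ) - g (m:ℤ)| = |∑ k ∈ Ico m n, (g ((k:ℤ)+1) - g (k:ℤ))| := by rw [h1]
      _ ≤ ∑ k ∈ Ico m n, |g ((k:ℤ)+1) - g (k:ℤ)| := Finset.abs_sum_le_sum_abs _ _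
      _ ≤ ∑ k ∈ range N, |g ((k:ℤ)+1) - g (k:ℤ)| := by
          apply Finset.sum_le_sum_of_subset_of_nonneg
          · intro k hk
            simp only [Finset.mem_Ico, Finset.mem_range] at *
            omega
          · exact fun _ _ _ => abs_nonneg _
  rcases le_total i' i with h | h
  · exact key i' i h hi.le
  · rw [abs_sub_comm]; exact key i i' h hi'.le

section main2
variable {N : ℕ} {u : ℤ → ℤ → ℝ}

/-- Discrete Poincaré inequality for mean-zero periodic grid functions. -/
theorem poincare (hN : 0 < N) (h0 : SS N u = 0) :
    SS N (fun i j => u i j ^ 2) ≤ 2 * (N:ℝ)^2 *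
      (SS N (fun i j => dX u i j ^ 2) + SS N (fun i j => dY u i j ^ 2)) := by
  have h0' : ∑ i ∈ range N, ∑ j ∈ range N, u (i:ℤ) (j:ℤ) = 0 := h0
  set Xr : ℕ → ℝ := fun j => ∑ k ∈ range N, |u ((k:ℤ)+1) (j:ℤ) - u (k:ℤ) (j:ℤ)| with hXr
  set Yr : ℕ → ℝ := fun i => ∑ k ∈ range N, |u (i:ℤ) ((k:ℤ)+1) - u (i:ℤ) (k:ℤ)| with hYr
  have hNpos : (0:ℝ) < N := by exact_mod_cast hN
  -- pointwise bound
  have claim1 : ∀ i ∈ range N, ∀ j ∈ range N,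
      |u (i:ℤ) (j:ℤ)| ≤ Xr j + (∑ i' ∈ range N, Yr i') / N := by
    intro i hi j hj
    simp only [Finset.mem_range] at hi hj
    have heq : (N:ℝ)^2 * u (i:ℤ) (j:ℤ)
        = ∑ i' ∈ range N, ∑ j' ∈ range N, (u (i:ℤ) (j:ℤ) - u (i':ℤ) (j':ℤ)) := by
      simp only [Finset.sum_sub_distrib, Finset.sum_const, Finset.card_range,
        nsmul_eq_mul, h0']
      ring
    have habs : (N:ℝ)^2 * |u (i:ℤ) (j:ℤ)|
        ≤ ∑ i' ∈ range N, ∑ j' ∈ range N, (Xr j + Yr i') := by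
      calc (N:ℝ)^2 * |u (i:ℤ) (j:ℤ)| = |(N:ℝ)^2 * u (i:ℤ) (j:ℤ)| := by
            rw [abs_mul, abs_of_nonneg (by positivity : (0:ℝ) ≤ (N:ℝ)^2)]
        _ = |∑ i' ∈ range N, ∑ j' ∈ range N, (u (i:ℤ) (j:ℤ) - u (i':ℤ) (j':ℤ))| := by rw [heq]
        _ ≤ ∑ i' ∈ range N, |∑ j' ∈ range N, (u (i:ℤ) (j:ℤ) - u (i':ℤ) (j':ℤ))| :=
            Finset.abs_sum_le_sum_abs _ _
        _ ≤ ∑ i' ∈ range N, ∑ j' ∈ range N, |u (i:ℤ) (j:ℤ) - u (i':ℤ) (j':ℤ)| :=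
            Finset.sum_le_sum fun i' _ => Finset.abs_sum_le_sum_abs _ _
        _ ≤ ∑ i' ∈ range N, ∑ j' ∈ range N, (Xr j + Yr i') := by
            apply Finset.sum_le_sum; intro i' hi'
            apply Finset.sum_le_sum; intro j' hj'
            simp only [Finset.mem_range] at hi' hj'
            have d1 : |u (i:ℤ) (j:ℤ) - u (i':ℤ) (j:ℤ)| ≤ Xr j :=
              tv_bound N (fun x => u x (j:ℤ)) hi hi'
            have d2 : |u (i':ℤ) (j:ℤ) - u (i':ℤ) (j':ℤ)| ≤ Yr i' := by
              rw [abs_sub_comm]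
              exact tv_bound N (fun y => u (i':ℤ) y) hj' hj
            calc |u (i:ℤ) (j:ℤ) - u (i':ℤ) (j':ℤ)|
                ≤ |u (i:ℤ) (j:ℤ) - u (i':ℤ) (j:ℤ)| + |u (i':ℤ) (j:ℤ) - u (i':ℤ) (j':ℤ)| := by
                  have := abs_sub_le (u (i:ℤ) (j:ℤ)) (u (i':ℤ) (j:ℤ)) (u (i':ℤ) (j':ℤ))
                  linarith [this]
              _ ≤ Xr j + Yr i' := add_le_add d1 d2
    have hsum : ∑ i' ∈ range N, ∑ j' ∈ range N, (Xr j + Yr i')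
        = (N:ℝ)^2 * Xr j + (N:ℝ) * ∑ i' ∈ range N, Yr i' := by
      simp only [Finset.sum_add_distrib, Finset.sum_const, Finset.card_range, nsmul_eq_mul,
        Finset.mul_sum, ← Finset.sum_mul]
      ring
    rw [hsum] at habs
    have hN2 : (0:ℝ) < (N:ℝ)^2 := by positivity
    rw [← mul_le_mul_iff_right₀ hN2]
    calc (N:ℝ)^2 * |u (i:ℤ) (j:ℤ)| ≤ (N:ℝ)^2 * Xr j + (N:ℝ) * ∑ i' ∈ range N, Yr i' := habs
      _ = (N:ℝ)^2 * (Xr j + (∑ i' ∈ range N, Yr i') / N) := by field_simp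
  -- sum up
  have claim2 : SS N (fun i j => u i j ^ 2)
      ≤ ∑ i ∈ range N, ∑ j ∈ range N,
          (2 * Xr j ^ 2 + 2 * ((∑ i' ∈ range N, Yr i') / N) ^ 2) := by
    apply Finset.sum_le_sum; intro i hi
    apply Finset.sum_le_sum; intro j hj
    have h1 := claim1 i hi j hj
    have h2 : 0 ≤ |u (i:ℤ) (j:ℤ)| := abs_nonneg _
    have h3 : u (i:ℤ) (j:ℤ) ^ 2 = |u (i:ℤ) (j:ℤ)| ^ 2 := (sq_abs _).symm
    show u (i:ℤ) (j:ℤ) ^ 2 ≤ _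
    nlinarith [h1, h2, sq_nonneg (Xr j - (∑ i' ∈ range N, Yr i') / N),
      sq_nonneg (Xr j + (∑ i' ∈ range N, Yr i') / N)]
  -- bound the two parts
  have hXb : ∀ j ∈ range N, Xr j ^ 2 ≤ (N:ℝ) * ∑ k ∈ range N, (dX u (k:ℤ) (j:ℤ))^2 := by
    intro j _
    have := sq_sum_le N (fun k => |u ((k:ℤ)+1) (j:ℤ) - u (k:ℤ) (j:ℤ)|)
    simpa [hXr, dX, sq_abs] using this
  have hYb : (∑ i' ∈ range N, Yr i') ^ 2
      ≤ (N:ℝ)^2 * SS N (fun i j => dY u i j ^ 2) := by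
    have h1 : (∑ i' ∈ range N, Yr i') ^ 2 ≤ (N:ℝ) * ∑ i' ∈ range N, Yr i' ^ 2 :=
      sq_sum_le N Yr
    have h2 : ∀ i' ∈ range N, Yr i' ^ 2 ≤ (N:ℝ) * ∑ k ∈ range N, (dY u (i':ℤ) (k:ℤ))^2 := by
      intro i' _
      have := sq_sum_le N (fun k => |u (i':ℤ) ((k:ℤ)+1) - u (i':ℤ) (k:ℤ)|)
      simpa [hYr, dY, sq_abs] using this
    calc (∑ i' ∈ range N, Yr i') ^ 2 ≤ (N:ℝ) * ∑ i' ∈ range N, Yr i' ^ 2 := h1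
      _ ≤ (N:ℝ) * ∑ i' ∈ range N, ((N:ℝ) * ∑ k ∈ range N, (dY u (i':ℤ) (k:ℤ))^2) := by
          apply mul_le_mul_of_nonneg_left (Finset.sum_le_sum h2) (le_of_lt hNpos)
      _ = (N:ℝ)^2 * SS N (fun i j => dY u i j ^ 2) := by
          rw [← Finset.mul_sum, SS]; ring
  -- assemble
  have final : ∑ i ∈ range N, ∑ j ∈ range N,
      (2 * Xr j ^ 2 + 2 * ((∑ i' ∈ range N, Yr i') / N) ^ 2)
      ≤ 2 * (N:ℝ)^2 * (SS N (fun i j => dX u i j ^ 2) + SS N (fun i j => dY u i j ^ 2)) := by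
    have e1 : ∑ i ∈ range N, ∑ j ∈ range N,
        (2 * Xr j ^ 2 + 2 * ((∑ i' ∈ range N, Yr i') / N) ^ 2)
        = (N:ℝ) * ∑ j ∈ range N, 2 * Xr j ^ 2
          + (N:ℝ)^2 * (2 * ((∑ i' ∈ range N, Yr i') / N) ^ 2) := by
      simp only [Finset.sum_add_distrib, Finset.sum_const, Finset.card_range, nsmul_eq_mul]
      rw [← Finset.mul_sum]
      ring
    rw [e1]
    have e2 : ∑ j ∈ range N, 2 * Xr j ^ 2
        ≤ 2 * (N:ℝ) * SS N (fun i j => dX u i j ^ 2) := by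
      calc ∑ j ∈ range N, 2 * Xr j ^ 2
          ≤ ∑ j ∈ range N, 2 * ((N:ℝ) * ∑ k ∈ range N, (dX u (k:ℤ) (j:ℤ))^2) := by
            apply Finset.sum_le_sum; intro j hj
            have := hXb j hj; nlinarith [this]
        _ = 2 * (N:ℝ) * SS N (fun i j => dX u i j ^ 2) := by
            rw [SS, Finset.sum_comm (s := range N) (t := range N)
              (f := fun i j => dX u (i:ℤ) (j:ℤ)^2)]
            rw [← Finset.mul_sum, ← Finset.mul_sum]
            ring
    have e3 : (N:ℝ)^2 * (2 * ((∑ i' ∈ range N, Yr i') / N) ^ 2)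
        ≤ 2 * (N:ℝ)^2 * SS N (fun i j => dY u i j ^ 2) := by
      rw [div_pow]
      have : ((∑ i' ∈ range N, Yr i')^2) / (N:ℝ)^2 ≤ SS N (fun i j => dY u i j ^ 2) := by
        rw [div_le_iff₀ (by positivity)]
        calc (∑ i' ∈ range N, Yr i')^2 ≤ (N:ℝ)^2 * SS N (fun i j => dY u i j ^ 2) := hYb
          _ = SS N (fun i j => dY u i j ^ 2) * (N:ℝ)^2 := by ring
      nlinarith [this]
    have hdx0 : 0 ≤ SS N (fun i j => dX u i j ^2) := SS_nonneg fun _ _ => sq_nonneg _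
    have hdy0 : 0 ≤ SS N (fun i j => dY u i j ^2) := SS_nonneg fun _ _ => sq_nonneg _
    nlinarith [e2, e3]
  calc SS N (fun i j => u i j ^ 2) ≤ _ := claim2
    _ ≤ _ := final

end main2


section main3
variable {N : ℕ} {u : ℤ → ℤ → ℝ}

theorem lp_expand (hx : PerX N u) (hy : PerY N u) :
    SS N (fun i j => lp u i j ^ 2)
      = SS N (fun i j => (dX u i j - dX u (i-1) j)^2)
        + SS N (fun i j => (dY u i j - dY u i (j-1))^2)
        + 2 * SS N (fun i j => (dX u i j - dX u (i-1) j) * (dY u i j - dY u i (j-1))) := by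
  rw [← SS_const_mul, ← SS_add, ← SS_add]
  exact SS_congr (fun i j => by simp only [lp]; ring)

theorem cross_y (hx : PerX N u) (hy : PerY N u) :
    SS N (fun i j => (dX u i (j + 1) - dX u i j) ^ 2) ≤ SS N (fun i j => lp u i j ^ 2) := by
  have e1 := lp_expand hx hy
  have hpq := crossPQ hx hy
  have h1 : 0 ≤ SS N (fun i j => (dX u i j - dX u (i-1) j)^2) :=
    SS_nonneg fun _ _ => sq_nonneg _
  have h2 : 0 ≤ SS N (fun i j => (dY u i j - dY u i (j-1))^2) :=
    SS_nonneg fun _ _ => sq_nonneg _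
  have h3 : 0 ≤ SS N (fun i j => (dX u i (j + 1) - dX u i j) ^ 2) :=
    SS_nonneg fun _ _ => sq_nonneg _
  linarith

theorem cross_x (hx : PerX N u) (hy : PerY N u) :
    SS N (fun i j => (dX u (i + 1) j - dX u i j) ^ 2) ≤ SS N (fun i j => lp u i j ^ 2) := by
  have hper : PerX N (fun i j => (dX u (i+1) j - dX u i j)^2) :=
    (((perX_dX hx).shiftxp 1).sub (perX_dX hx)).pow 2
  have hshift : SS N (fun i j => (dX u (i+1) j - dX u i j)^2)
      = SS N (fun i j => (dX u i j - dX u (i-1) j)^2) :=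
    (SS_shift_x_neg hper).symm.trans (SS_congr (fun i j => by simp only [dX, m1p1]))
  have e1 := lp_expand hx hy
  have hpq := crossPQ hx hy
  have h2 : 0 ≤ SS N (fun i j => (dY u i j - dY u i (j-1))^2) :=
    SS_nonneg fun _ _ => sq_nonneg _
  have h3 : 0 ≤ SS N (fun i j => (dX u i (j + 1) - dX u i j) ^ 2) :=
    SS_nonneg fun _ _ => sq_nonneg _
  linarith

theorem energy_le (hx : PerX N u) (hy : PerY N u) :
    SS N (fun i j => dX u i j ^ 2) + SS N (fun i j => dY u i j ^ 2)
      ≤ Real.sqrt (SS N (fun i j => u i j ^ 2)) * Real.sqrt (SS N (fun i j => lp u i j ^ 2)) := by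
  have he := energy hx hy
  have csq := SS_cs (N := N) u (lp u)
  have hT : 0 ≤ SS N (fun i j => u i j ^ 2) := SS_nonneg fun _ _ => sq_nonneg _
  have hA : 0 ≤ SS N (fun i j => dX u i j ^ 2) := SS_nonneg fun _ _ => sq_nonneg _
  have hB : 0 ≤ SS N (fun i j => dY u i j ^ 2) := SS_nonneg fun _ _ => sq_nonneg _
  have hAB : 0 ≤ SS N (fun i j => dX u i j ^ 2) + SS N (fun i j => dY u i j ^ 2) :=
    add_nonneg hA hB
  have hsq : (SS N (fun i j => u i j * lp u i j))^2
      = (SS N (fun i j => dX u i j ^ 2) + SS N (fun i j => dY u i j ^ 2))^2 := by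
    rw [he]; ring
  calc SS N (fun i j => dX u i j ^ 2) + SS N (fun i j => dY u i j ^ 2)
      = Real.sqrt ((SS N (fun i j => dX u i j ^ 2) + SS N (fun i j => dY u i j ^ 2))^2) :=
        (Real.sqrt_sq hAB).symm
    _ ≤ Real.sqrt (SS N (fun i j => u i j ^ 2) * SS N (fun i j => lp u i j ^ 2)) :=
        Real.sqrt_le_sqrt (by linarith [csq, hsq])
    _ = _ := Real.sqrt_mul hT _

theorem exists_le_avg (hN : 0 < N) (w : ℕ → ℝ) :
    ∃ i' ∈ range N, w i' ≤ (∑ k ∈ range N, w k) / N := by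
  have hne : (range N).Nonempty := ⟨0, Finset.mem_range.mpr hN⟩
  apply Finset.exists_le_of_sum_le hne
  have : ∑ _k ∈ range N, (∑ k ∈ range N, w k) / (N:ℝ) = ∑ k ∈ range N, w k := by
    rw [Finset.sum_const, Finset.card_range, nsmul_eq_mul]
    field_simp
  exact le_of_eq this.symm

/-- The discrete Ladyzhenskaya-type bound (no periodicity needed). -/
theorem lady_core (hN : 0 < N) (v : ℤ → ℤ → ℝ) :
    SS N (fun i j => v i j ^ 4)
      ≤ (SS N (fun i j => v i j ^ 2) / N
            + SS N (fun i j => |v (i+1) j ^ 2 - v i j ^ 2|))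
        * (SS N (fun i j => v i j ^ 2) / N
            + SS N (fun i j => |v i (j+1) ^ 2 - v i j ^ 2|)) := by
  set Frow : ℕ → ℝ := fun j => (∑ k ∈ range N, v (k:ℤ) (j:ℤ) ^ 2) / N
      + ∑ k ∈ range N, |v ((k:ℤ)+1) (j:ℤ) ^ 2 - v (k:ℤ) (j:ℤ) ^ 2| with hFrow
  set Fcol : ℕ → ℝ := fun i => (∑ k ∈ range N, v (i:ℤ) (k:ℤ) ^ 2) / N
      + ∑ k ∈ range N, |v (i:ℤ) ((k:ℤ)+1) ^ 2 - v (i:ℤ) (k:ℤ) ^ 2| with hFcol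
  have row : ∀ i ∈ range N, ∀ j ∈ range N, v (i:ℤ) (j:ℤ) ^ 2 ≤ Frow j := by
    intro i hi j hj
    obtain ⟨i', hi', havg⟩ := exists_le_avg hN (fun k => v (k:ℤ) (j:ℤ) ^ 2)
    have htv : |v (i:ℤ) (j:ℤ) ^ 2 - v (i':ℤ) (j:ℤ) ^ 2|
        ≤ ∑ k ∈ range N, |v ((k:ℤ)+1) (j:ℤ) ^ 2 - v (k:ℤ) (j:ℤ) ^ 2| :=
      tv_bound N (fun x => v x (j:ℤ) ^ 2) (Finset.mem_range.mp hi) (Finset.mem_range.mp hi')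
    have hle := le_abs_self (v (i:ℤ) (j:ℤ) ^ 2 - v (i':ℤ) (j:ℤ) ^ 2)
    simp only [hFrow]
    linarith
  have col : ∀ i ∈ range N, ∀ j ∈ range N, v (i:ℤ) (j:ℤ) ^ 2 ≤ Fcol i := by
    intro i hi j hj
    obtain ⟨j', hj', havg⟩ := exists_le_avg hN (fun k => v (i:ℤ) (k:ℤ) ^ 2)
    have htv : |v (i:ℤ) (j:ℤ) ^ 2 - v (i:ℤ) (j':ℤ) ^ 2|
        ≤ ∑ k ∈ range N, |v (i:ℤ) ((k:ℤ)+1) ^ 2 - v (i:ℤ) (k:ℤ) ^ 2| :=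
      tv_bound N (fun y => v (i:ℤ) y ^ 2) (Finset.mem_range.mp hj) (Finset.mem_range.mp hj')
    have hle := le_abs_self (v (i:ℤ) (j:ℤ) ^ 2 - v (i:ℤ) (j':ℤ) ^ 2)
    simp only [hFcol]
    linarith
  have step1 : SS N (fun i j => v i j ^ 4)
      ≤ ∑ i ∈ range N, ∑ j ∈ range N, Frow j * Fcol i := by
    apply Finset.sum_le_sum; intro i hi
    apply Finset.sum_le_sum; intro j hj
    show v (i:ℤ) (j:ℤ) ^ 4 ≤ _
    have h1 := row i hi j hj
    have h2 := col i hi j hj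
    have h0 : (0:ℝ) ≤ v (i:ℤ) (j:ℤ) ^ 2 := sq_nonneg _
    calc v (i:ℤ) (j:ℤ) ^ 4 = v (i:ℤ) (j:ℤ) ^ 2 * v (i:ℤ) (j:ℤ) ^ 2 := by ring
      _ ≤ Frow j * Fcol i := mul_le_mul h1 h2 h0 (le_trans h0 h1)
  have step2 : ∑ i ∈ range N, ∑ j ∈ range N, Frow j * Fcol i
      = (∑ j ∈ range N, Frow j) * (∑ i ∈ range N, Fcol i) := by
    rw [Finset.sum_comm]
    rw [Finset.sum_mul]
    apply Finset.sum_congr rfl; intro j _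
    rw [Finset.mul_sum]
  have hrow_sum : ∑ j ∈ range N, Frow j
      = SS N (fun i j => v i j ^ 2) / N + SS N (fun i j => |v (i+1) j ^ 2 - v i j ^ 2|) := by
    simp only [hFrow]
    rw [Finset.sum_add_distrib, ← Finset.sum_div]
    congr 1
    · congr 1
      exact Finset.sum_comm
    · exact Finset.sum_comm
  have hcol_sum : ∑ i ∈ range N, Fcol i
      = SS N (fun i j => v i j ^ 2) / N + SS N (fun i j => |v i (j+1) ^ 2 - v i j ^ 2|) := by
    simp only [hFcol]
    rw [Finset.sum_add_distrib, ← Finset.sum_div]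
    rfl
  calc SS N (fun i j => v i j ^ 4) ≤ _ := step1
    _ = _ := step2
    _ = _ := by rw [hrow_sum, hcol_sum]

/-- Cauchy–Schwarz bound for the total variation of `v²` in the x-direction. -/
theorem V_bound_x {v : ℤ → ℤ → ℝ} (hvx : PerX N v) :
    SS N (fun i j => |v (i+1) j ^ 2 - v i j ^ 2|)
      ≤ 2 * Real.sqrt (SS N (fun i j => v i j ^ 2))
          * Real.sqrt (SS N (fun i j => (v (i+1) j - v i j) ^ 2)) := by
  have hT0 : 0 ≤ SS N (fun i j => v i j ^ 2) := SS_nonneg fun _ _ => sq_nonneg _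
  have hS0 : 0 ≤ SS N (fun i j => (v (i+1) j - v i j) ^ 2) := SS_nonneg fun _ _ => sq_nonneg _
  have hX0 : 0 ≤ SS N (fun i j => |v (i+1) j ^ 2 - v i j ^ 2|) :=
    SS_nonneg fun _ _ => abs_nonneg _
  have e : SS N (fun i j => |v (i+1) j ^ 2 - v i j ^ 2|)
      = SS N (fun i j => |v (i+1) j + v i j| * |v (i+1) j - v i j|) :=
    SS_congr (fun i j => by rw [← abs_mul]; congr 1; ring)
  have hcs := SS_cs (N := N) (fun i j => |v (i+1) j + v i j|) (fun i j => |v (i+1) j - v i j|)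
  simp only [sq_abs] at hcs
  have h4 : SS N (fun i j => (v (i+1) j + v i j) ^ 2) ≤ 4 * SS N (fun i j => v i j ^ 2) := by
    have hs : SS N (fun i j => v (i+1) j ^ 2) = SS N (fun i j => v i j ^ 2) :=
      SS_shift_x (hvx.pow 2)
    have hle : SS N (fun i j => (v (i+1) j + v i j) ^ 2)
        ≤ SS N (fun i j => 2 * v (i+1) j ^ 2 + 2 * v i j ^ 2) :=
      SS_le (fun i j => by nlinarith [sq_nonneg (v (i+1) j - v i j)])
    have : SS N (fun i j => 2 * v (i+1) j ^ 2 + 2 * v i j ^ 2)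
        = 2 * SS N (fun i j => v (i+1) j ^ 2) + 2 * SS N (fun i j => v i j ^ 2) := by
      rw [← SS_const_mul, ← SS_const_mul, ← SS_add]
    linarith [hle, this.le, this.ge, hs.le, hs.ge]
  have key : (SS N (fun i j => |v (i+1) j ^ 2 - v i j ^ 2|))^2
      ≤ 4 * SS N (fun i j => v i j ^ 2) * SS N (fun i j => (v (i+1) j - v i j) ^ 2) := by
    rw [e]
    calc (SS N (fun i j => |v (i+1) j + v i j| * |v (i+1) j - v i j|))^2
        ≤ SS N (fun i j => (v (i+1) j + v i j) ^ 2)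
            * SS N (fun i j => (v (i+1) j - v i j) ^ 2) := hcs
      _ ≤ _ := by nlinarith [h4, hS0]
  calc SS N (fun i j => |v (i+1) j ^ 2 - v i j ^ 2|)
      = Real.sqrt ((SS N (fun i j => |v (i+1) j ^ 2 - v i j ^ 2|))^2) := (Real.sqrt_sq hX0).symm
    _ ≤ Real.sqrt (4 * SS N (fun i j => v i j ^ 2)
          * SS N (fun i j => (v (i+1) j - v i j) ^ 2)) := Real.sqrt_le_sqrt key
    _ = _ := by
        rw [show (4:ℝ) * SS N (fun i j => v i j ^ 2)
              * SS N (fun i j => (v (i+1) j - v i j) ^ 2)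
            = (2 * Real.sqrt (SS N (fun i j => v i j ^ 2))
                * Real.sqrt (SS N (fun i j => (v (i+1) j - v i j) ^ 2)))^2 from by
          rw [mul_pow, mul_pow, Real.sq_sqrt hT0, Real.sq_sqrt hS0]; ring]
        exact Real.sqrt_sq (by positivity)

/-- Cauchy–Schwarz bound for the total variation of `v²` in the y-direction. -/
theorem V_bound_y {v : ℤ → ℤ → ℝ} (hvy : PerY N v) :
    SS N (fun i j => |v i (j+1) ^ 2 - v i j ^ 2|)
      ≤ 2 * Real.sqrt (SS N (fun i j => v i j ^ 2))
          * Real.sqrt (SS N (fun i j => (v i (j+1) - v i j) ^ 2)) := by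
  have hT0 : 0 ≤ SS N (fun i j => v i j ^ 2) := SS_nonneg fun _ _ => sq_nonneg _
  have hS0 : 0 ≤ SS N (fun i j => (v i (j+1) - v i j) ^ 2) := SS_nonneg fun _ _ => sq_nonneg _
  have hX0 : 0 ≤ SS N (fun i j => |v i (j+1) ^ 2 - v i j ^ 2|) :=
    SS_nonneg fun _ _ => abs_nonneg _
  have e : SS N (fun i j => |v i (j+1) ^ 2 - v i j ^ 2|)
      = SS N (fun i j => |v i (j+1) + v i j| * |v i (j+1) - v i j|) :=
    SS_congr (fun i j => by rw [← abs_mul]; congr 1; ring)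
  have hcs := SS_cs (N := N) (fun i j => |v i (j+1) + v i j|) (fun i j => |v i (j+1) - v i j|)
  simp only [sq_abs] at hcs
  have h4 : SS N (fun i j => (v i (j+1) + v i j) ^ 2) ≤ 4 * SS N (fun i j => v i j ^ 2) := by
    have hs : SS N (fun i j => v i (j+1) ^ 2) = SS N (fun i j => v i j ^ 2) :=
      SS_shift_y (hvy.pow 2)
    have hle : SS N (fun i j => (v i (j+1) + v i j) ^ 2)
        ≤ SS N (fun i j => 2 * v i (j+1) ^ 2 + 2 * v i j ^ 2) :=
      SS_le (fun i j => by nlinarith [sq_nonneg (v i (j+1) - v i j)])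
    have : SS N (fun i j => 2 * v i (j+1) ^ 2 + 2 * v i j ^ 2)
        = 2 * SS N (fun i j => v i (j+1) ^ 2) + 2 * SS N (fun i j => v i j ^ 2) := by
      rw [← SS_const_mul, ← SS_const_mul, ← SS_add]
    linarith [hle, this.le, this.ge, hs.le, hs.ge]
  have key : (SS N (fun i j => |v i (j+1) ^ 2 - v i j ^ 2|))^2
      ≤ 4 * SS N (fun i j => v i j ^ 2) * SS N (fun i j => (v i (j+1) - v i j) ^ 2) := by
    rw [e]
    calc (SS N (fun i j => |v i (j+1) + v i j| * |v i (j+1) - v i j|))^2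
        ≤ SS N (fun i j => (v i (j+1) + v i j) ^ 2)
            * SS N (fun i j => (v i (j+1) - v i j) ^ 2) := hcs
      _ ≤ _ := by nlinarith [h4, hS0]
  calc SS N (fun i j => |v i (j+1) ^ 2 - v i j ^ 2|)
      = Real.sqrt ((SS N (fun i j => |v i (j+1) ^ 2 - v i j ^ 2|))^2) := (Real.sqrt_sq hX0).symm
    _ ≤ Real.sqrt (4 * SS N (fun i j => v i j ^ 2)
          * SS N (fun i j => (v i (j+1) - v i j) ^ 2)) := Real.sqrt_le_sqrt key
    _ = _ := by
        rw [show (4:ℝ) * SS N (fun i j => v i j ^ 2)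
              * SS N (fun i j => (v i (j+1) - v i j) ^ 2)
            = (2 * Real.sqrt (SS N (fun i j => v i j ^ 2))
                * Real.sqrt (SS N (fun i j => (v i (j+1) - v i j) ^ 2)))^2 from by
          rw [mul_pow, mul_pow, Real.sq_sqrt hT0, Real.sq_sqrt hS0]; ring]
        exact Real.sqrt_sq (by positivity)

end main3


set_option maxHeartbeats 1000000 in
/-- Purely arithmetic assembly of the estimates. -/
theorem arith {n A B T W T4 Vx Vy Sx Sy : ℝ} (hn : 0 < n)
    (hA0 : 0 ≤ A) (hB0 : 0 ≤ B) (hT0 : 0 ≤ T) (hW0 : 0 ≤ W)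
    (hVx0 : 0 ≤ Vx) (hVy0 : 0 ≤ Vy) (hSx0 : 0 ≤ Sx) (hSy0 : 0 ≤ Sy)
    (hEn : A + B ≤ Real.sqrt T * Real.sqrt W)
    (hPoin : T ≤ 2 * n ^ 2 * (A + B))
    (hlady : T4 ≤ (A / n + Vx) * (A / n + Vy))
    (hVx : Vx ≤ 2 * Real.sqrt A * Real.sqrt Sx)
    (hVy : Vy ≤ 2 * Real.sqrt A * Real.sqrt Sy)
    (hSx : Sx ≤ W) (hSy : Sy ≤ W) :
    T4 ≤ 16 * Real.sqrt T * (W * Real.sqrt W) := by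
  have sA0 := Real.sqrt_nonneg A
  have sT0 := Real.sqrt_nonneg T
  have sW0 := Real.sqrt_nonneg W
  have hA : A ≤ Real.sqrt T * Real.sqrt W := le_trans (by linarith) hEn
  have hVx' : Vx ≤ 2 * Real.sqrt A * Real.sqrt W :=
    le_trans hVx (mul_le_mul_of_nonneg_left (Real.sqrt_le_sqrt hSx) (by positivity))
  have hVy' : Vy ≤ 2 * Real.sqrt A * Real.sqrt W :=
    le_trans hVy (mul_le_mul_of_nonneg_left (Real.sqrt_le_sqrt hSy) (by positivity))
  have hT2 : T ≤ 2 * n ^ 2 * (Real.sqrt T * Real.sqrt W) :=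
    le_trans hPoin (mul_le_mul_of_nonneg_left hEn (by positivity))
  have hsT_le : Real.sqrt T ≤ 2 * n ^ 2 * Real.sqrt W := by
    rcases eq_or_lt_of_le sT0 with h | h
    · rw [← h]; positivity
    · have hTT : Real.sqrt T * Real.sqrt T = T := Real.mul_self_sqrt hT0
      have h2 : Real.sqrt T * Real.sqrt T ≤ (2 * n ^ 2 * Real.sqrt W) * Real.sqrt T := by
        rw [hTT]; linarith [hT2]
      exact le_of_mul_le_mul_right h2 h
  have hA2 : A ≤ 2 * n ^ 2 * W := by
    calc A ≤ Real.sqrt T * Real.sqrt W := hA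
      _ ≤ (2 * n ^ 2 * Real.sqrt W) * Real.sqrt W :=
          mul_le_mul_of_nonneg_right hsT_le sW0
      _ = 2 * n ^ 2 * W := by
          rw [mul_assoc, Real.mul_self_sqrt hW0]
  have hsA : Real.sqrt A ≤ Real.sqrt 2 * n * Real.sqrt W := by
    have h1 : Real.sqrt A ≤ Real.sqrt (2 * n ^ 2 * W) := Real.sqrt_le_sqrt hA2
    rwa [show (2:ℝ) * n ^ 2 * W = 2 * (n ^ 2 * W) by ring,
      Real.sqrt_mul (by norm_num), Real.sqrt_mul (by positivity : (0:ℝ) ≤ n ^ 2),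
      Real.sqrt_sq hn.le, ← mul_assoc] at h1
  have hs2 : Real.sqrt 2 ≤ 2 := by
    nlinarith [Real.sq_sqrt (by norm_num : (0:ℝ) ≤ 2), Real.sqrt_nonneg 2]
  have hdiv : A / n ≤ 2 * Real.sqrt A * Real.sqrt W := by
    rw [div_le_iff₀ hn]
    calc A = Real.sqrt A * Real.sqrt A := (Real.mul_self_sqrt hA0).symm
      _ ≤ Real.sqrt A * (Real.sqrt 2 * n * Real.sqrt W) :=
          mul_le_mul_of_nonneg_left hsA sA0
      _ ≤ Real.sqrt A * (2 * n * Real.sqrt W) := by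
          have h9 : Real.sqrt 2 * n * Real.sqrt W ≤ 2 * n * Real.sqrt W := by
            have h8 := mul_le_mul_of_nonneg_right
              (mul_le_mul_of_nonneg_right hs2 hn.le) sW0
            linarith [h8]
          exact mul_le_mul_of_nonneg_left h9 sA0
      _ = 2 * Real.sqrt A * Real.sqrt W * n := by ring
  have hfacx : A / n + Vx ≤ 4 * Real.sqrt A * Real.sqrt W := by linarith
  have hfacy : A / n + Vy ≤ 4 * Real.sqrt A * Real.sqrt W := by linarith
  have hfx0 : 0 ≤ A / n + Vx := add_nonneg (div_nonneg hA0 hn.le) hVx0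
  have hfy0 : 0 ≤ A / n + Vy := add_nonneg (div_nonneg hA0 hn.le) hVy0
  have hprod : T4 ≤ 16 * A * W := by
    calc T4 ≤ (A / n + Vx) * (A / n + Vy) := hlady
      _ ≤ (4 * Real.sqrt A * Real.sqrt W) * (4 * Real.sqrt A * Real.sqrt W) :=
          mul_le_mul hfacx hfacy hfy0 (by positivity)
      _ = 16 * (Real.sqrt A * Real.sqrt A) * (Real.sqrt W * Real.sqrt W) := by ring
      _ = 16 * A * W := by rw [Real.mul_self_sqrt hA0, Real.mul_self_sqrt hW0]
  calc T4 ≤ 16 * A * W := hprod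
    _ ≤ 16 * (Real.sqrt T * Real.sqrt W) * W := by
        have h7 := mul_le_mul_of_nonneg_right hA hW0
        linarith [h7]
    _ = 16 * Real.sqrt T * (W * Real.sqrt W) := by ring

section final
variable {N : ℕ} {u : ℤ → ℤ → ℝ}

/-- The key unweighted inequality `∑ (Dx u)⁴ ≤ 16 √(∑u²) (∑(Δu)²)^{3/2}`. -/
theorem key_ineq (hN : 0 < N) (hx : PerX N u) (hy : PerY N u) (h0 : SS N u = 0) :
    SS N (fun i j => dX u i j ^ 4)
      ≤ 16 * Real.sqrt (SS N (fun i j => u i j ^ 2))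
          * (SS N (fun i j => lp u i j ^ 2)
              * Real.sqrt (SS N (fun i j => lp u i j ^ 2))) := by
  have hn : (0:ℝ) < (N:ℝ) := by exact_mod_cast hN
  exact arith hn
    (SS_nonneg fun _ _ => sq_nonneg _) (SS_nonneg fun _ _ => sq_nonneg _)
    (SS_nonneg fun _ _ => sq_nonneg _) (SS_nonneg fun _ _ => sq_nonneg _)
    (SS_nonneg fun _ _ => abs_nonneg _) (SS_nonneg fun _ _ => abs_nonneg _)
    (SS_nonneg fun _ _ => sq_nonneg _) (SS_nonneg fun _ _ => sq_nonneg _)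
    (energy_le hx hy) (poincare hN h0) (lady_core hN (dX u))
    (V_bound_x (perX_dX hx)) (V_bound_y (perY_dX hy))
    (cross_x hx hy) (cross_y hx hy)

end final
end S18

set_option maxHeartbeats 1000000 in
theorem statement18 (L : ℝ) (hL : 0 < L) :
    ∃ C > (0 : ℝ), ∀ K : ℕ, 1 ≤ K → ∀ u : ℤ → ℤ → ℝ,
      (∀ i j : ℤ, u (i + (2 * K + 1 : ℕ)) j = u i j) →
      (∀ i j : ℤ, u i (j + (2 * K + 1 : ℕ)) = u i j) →
      ((L / (2 * K + 1 : ℕ)) ^ 2 *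
          ∑ i ∈ Finset.range (2 * K + 1), ∑ j ∈ Finset.range (2 * K + 1),
            u (i : ℤ) (j : ℤ) = 0) →
      discDxL4 (L / (2 * K + 1 : ℕ)) (2 * K + 1) u ≤
        C * discL2 (L / (2 * K + 1 : ℕ)) (2 * K + 1) u ^ ((1 : ℝ) / 4) *
          discL2 (L / (2 * K + 1 : ℕ)) (2 * K + 1)
            (discLap (L / (2 * K + 1 : ℕ)) u) ^ ((3 : ℝ) / 4) := by
  classical
  refine ⟨2, by norm_num, ?_⟩
  intro K hK u hx hy h0
  set N : ℕ := 2 * K + 1 with hNdef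
  have hN : 0 < N := by omega
  have hNR : (0:ℝ) < (N:ℝ) := by exact_mod_cast hN
  set h : ℝ := L / (N:ℝ) with hdef
  have hhpos : 0 < h := div_pos hL hNR
  have hx' : S18.PerX N u := hx
  have hy' : S18.PerY N u := hy
  have h0' : S18.SS N u = 0 := by
    have hne : h ^ 2 ≠ 0 := by positivity
    exact (mul_eq_zero.mp h0).resolve_left hne
  have key := S18.key_ineq hN hx' hy' h0'
  have hT40 : 0 ≤ S18.SS N (fun i j => S18.dX u i j ^ 4) :=
    S18.SS_nonneg fun i j => by positivity
  have hT0 : 0 ≤ S18.SS N (fun i j => u i j ^ 2) :=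
    S18.SS_nonneg fun i j => sq_nonneg _
  have hW0 : 0 ≤ S18.SS N (fun i j => S18.lp u i j ^ 2) :=
    S18.SS_nonneg fun i j => sq_nonneg _
  -- identify the discrete L² norm of u
  have hs_eq : discL2 h N u = h * Real.sqrt (S18.SS N (fun i j => u i j ^ 2)) := by
    rw [show discL2 h N u
        = Real.sqrt (h ^ 2 * S18.SS N (fun i j => u i j ^ 2)) from rfl,
      Real.sqrt_mul (sq_nonneg h), Real.sqrt_sq hhpos.le]
  -- identify the discrete L² norm of the Laplacian
  have hlap : ∀ i j : ℤ, discLap h u i j = S18.lp u i j / h ^ 2 := by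
    intro i j
    rw [discLap, show S18.lp u i j
        = u (i+1) j + u (i-1) j + u i (j+1) + u i (j-1) - 4 * u i j from by
      simp only [S18.lp, S18.dX, S18.dY, S18.m1p1]; ring]
  have ht_eq : discL2 h N (discLap h u)
      = Real.sqrt (S18.SS N (fun i j => S18.lp u i j ^ 2)) / h := by
    have hsum : ∑ i ∈ Finset.range N, ∑ j ∈ Finset.range N, (discLap h u (i:ℤ) (j:ℤ)) ^ 2
        = S18.SS N (fun i j => S18.lp u i j ^ 2) / h ^ 4 := by
      calc ∑ i ∈ Finset.range N, ∑ j ∈ Finset.range N, (discLap h u (i:ℤ) (j:ℤ)) ^ 2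
          = ∑ i ∈ Finset.range N, ∑ j ∈ Finset.range N,
              (S18.lp u (i:ℤ) (j:ℤ) ^ 2 / h ^ 4) := by
            apply Finset.sum_congr rfl; intro i _
            apply Finset.sum_congr rfl; intro j _
            rw [hlap, div_pow, ← pow_mul]
        _ = S18.SS N (fun i j => S18.lp u i j ^ 2) / h ^ 4 := by
            simp only [← Finset.sum_div]
            rfl
    rw [show discL2 h N (discLap h u)
        = Real.sqrt (h ^ 2 * ∑ i ∈ Finset.range N, ∑ j ∈ Finset.range N,
            (discLap h u (i:ℤ) (j:ℤ)) ^ 2) from rfl, hsum]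
    rw [show h ^ 2 * (S18.SS N (fun i j => S18.lp u i j ^ 2) / h ^ 4)
        = S18.SS N (fun i j => S18.lp u i j ^ 2) / h ^ 2 from by
      field_simp]
    rw [Real.sqrt_div hW0, Real.sqrt_sq hhpos.le]
  -- identify the discrete L⁴ norm of Dx u
  have hX : h ^ 2 * ∑ i ∈ Finset.range N, ∑ j ∈ Finset.range N,
        ((u ((i:ℤ) + 1) (j:ℤ) - u (i:ℤ) (j:ℤ)) / h) ^ 4
      = S18.SS N (fun i j => S18.dX u i j ^ 4) / h ^ 2 := by
    have hsum : ∑ i ∈ Finset.range N, ∑ j ∈ Finset.range N,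
          ((u ((i:ℤ) + 1) (j:ℤ) - u (i:ℤ) (j:ℤ)) / h) ^ 4
        = S18.SS N (fun i j => S18.dX u i j ^ 4) / h ^ 4 := by
      calc ∑ i ∈ Finset.range N, ∑ j ∈ Finset.range N,
            ((u ((i:ℤ) + 1) (j:ℤ) - u (i:ℤ) (j:ℤ)) / h) ^ 4
          = ∑ i ∈ Finset.range N, ∑ j ∈ Finset.range N,
              (S18.dX u (i:ℤ) (j:ℤ) ^ 4 / h ^ 4) := by
            apply Finset.sum_congr rfl; intro i _
            apply Finset.sum_congr rfl; intro j _
            rw [div_pow]; rfl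
        _ = _ := by simp only [← Finset.sum_div]; rfl
    rw [hsum]; field_simp
  -- the main inequality in norm form
  have hs0 : (0:ℝ) ≤ discL2 h N u := Real.sqrt_nonneg _
  have ht0 : (0:ℝ) ≤ discL2 h N (discLap h u) := Real.sqrt_nonneg _
  have main : S18.SS N (fun i j => S18.dX u i j ^ 4) / h ^ 2
      ≤ 16 * discL2 h N u * discL2 h N (discLap h u) ^ 3 := by
    rw [hs_eq, ht_eq, div_le_iff₀ (by positivity : (0:ℝ) < h ^ 2)]
    have hW3 : Real.sqrt (S18.SS N (fun i j => S18.lp u i j ^ 2)) ^ 3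
        = S18.SS N (fun i j => S18.lp u i j ^ 2)
          * Real.sqrt (S18.SS N (fun i j => S18.lp u i j ^ 2)) := by
      rw [pow_succ, Real.sq_sqrt hW0]
    have heq : 16 * (h * Real.sqrt (S18.SS N (fun i j => u i j ^ 2)))
          * (Real.sqrt (S18.SS N (fun i j => S18.lp u i j ^ 2)) / h) ^ 3 * h ^ 2
        = 16 * Real.sqrt (S18.SS N (fun i j => u i j ^ 2))
          * (S18.SS N (fun i j => S18.lp u i j ^ 2)
              * Real.sqrt (S18.SS N (fun i j => S18.lp u i j ^ 2))) := by
      rw [div_pow, hW3]; field_simp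
    rw [heq]; exact key
  -- rpow algebra
  have hrpow : (2:ℝ) * discL2 h N u ^ ((1:ℝ)/4) * discL2 h N (discLap h u) ^ ((3:ℝ)/4)
      = (16 * discL2 h N u * discL2 h N (discLap h u) ^ 3) ^ ((1:ℝ)/4) := by
    rw [show (16:ℝ) * discL2 h N u * discL2 h N (discLap h u) ^ 3
        = 16 * (discL2 h N u * discL2 h N (discLap h u) ^ 3) by ring]
    rw [Real.mul_rpow (by norm_num : (0:ℝ) ≤ 16) (by positivity)]
    rw [Real.mul_rpow hs0 (by positivity)]
    rw [show ((16:ℝ))^((1:ℝ)/4) = 2 from by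
      rw [show (16:ℝ) = 2^(4:ℕ) by norm_num, ← Real.rpow_natCast 2 4,
        ← Real.rpow_mul (by norm_num : (0:ℝ) ≤ 2)]
      norm_num]
    rw [show (discL2 h N (discLap h u) ^ 3) ^ ((1:ℝ)/4)
        = discL2 h N (discLap h u) ^ ((3:ℝ)/4) from by
      rw [← Real.rpow_natCast (discL2 h N (discLap h u)) 3, ← Real.rpow_mul ht0]
      norm_num]
    ring
  calc discDxL4 h N u
      = (S18.SS N (fun i j => S18.dX u i j ^ 4) / h ^ 2) ^ ((1:ℝ)/4) := by
        rw [discDxL4, hX]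
    _ ≤ (16 * discL2 h N u * discL2 h N (discLap h u) ^ 3) ^ ((1:ℝ)/4) :=
        Real.rpow_le_rpow (div_nonneg hT40 (sq_nonneg h)) main (by norm_num)
    _ = _ := hrpow.symm
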